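/- arXiv:2110.06051 — 2 statements merged into one kernel-verified Lean document; each statement's English description precedes it below -/
import Mathlib

section
/- Let s_S : Fin n → ℝ be sparse scores sorted in decreasing order, s_D : Fin n → ℝ be dense scores, α ∈ [0,1], and φ i = α * s_S i + (1-α) * s_D i be interpolated scores. Let M be an upper bound on all dense scores (s_D i ≤ M for all i). If after processing the first m ≥ k indices the k-th largest value t among {φ 0, ..., φ (m-1)} satisfies α * s_S m + (1-α) * M ≤ t, then every unprocessed index j ≥ m satisfies φ j ≤ t; hence the top-k interpolated scores over all n indices are exactly the top-k among the first m processed indices. -/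
/-- Correctness of early stopping with a true upper bound `M` on the dense
scores: if the stopping criterion `α * s_S m + (1 - α) * M ≤ t` holds, where
`t` is the `k`-th largest interpolated score among the first `m` processed
indices, then all unprocessed scores are at most `t` and the top-`k`
interpolated scores over all `n` indices are exactly the top-`k` among the
first `m`. -/
theorem early_stopping_correct {n k m : ℕ} (hk : 1 ≤ k) (hkm : k ≤ m)
    (hmn : m < n) (sS sD : Fin n → ℝ) (M α : ℝ)
    (hanti : Antitone sS) (hM : ∀ i, sD i ≤ M) (hα : α ∈ Set.Icc (0 : ℝ) 1)
    (φ : Fin n → ℝ) (hφ : ∀ i, φ i = α * sS i + (1 - α) * sD i)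
    (t : ℝ)
    (ht : (((List.ofFn fun i : Fin m => φ (Fin.castLE hmn.le i)).insertionSort
      (· ≥ ·))[k - 1]?) = some t)
    (hstop : α * sS ⟨m, hmn⟩ + (1 - α) * M ≤ t) :
    (∀ j : Fin n, m ≤ j.val → φ j ≤ t) ∧
      (↑(((List.ofFn φ).insertionSort (· ≥ ·)).take k) : Multiset ℝ) =
        ↑(((List.ofFn fun i : Fin m => φ (Fin.castLE hmn.le i)).insertionSort
          (· ≥ ·)).take k) := by
  obtain ⟨hα0, hα1⟩ := hα
  -- Part 1: unprocessed scores are bounded by `t`.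
  have part1 : ∀ j : Fin n, m ≤ j.val → φ j ≤ t := by
    intro j hj
    have h1 : sS j ≤ sS ⟨m, hmn⟩ := hanti (by exact hj)
    have := hM j
    calc φ j = α * sS j + (1 - α) * sD j := hφ j
      _ ≤ α * sS ⟨m, hmn⟩ + (1 - α) * M := by
          have := hM j
          nlinarith
      _ ≤ t := hstop
  refine ⟨part1, ?_⟩
  -- Notation
  set L1 : List ℝ := List.ofFn fun i : Fin m => φ (Fin.castLE hmn.le i) with hL1
  set S1 : List ℝ := L1.insertionSort (· ≥ ·) with hS1
  have hS1sorted : S1.Pairwise (· ≥ ·) := List.pairwise_insertionSort _ _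
  have hS1len : S1.length = m := by
    rw [hS1, List.length_insertionSort, hL1, List.length_ofFn]
  have hklen : k - 1 < S1.length := by omega
  have htval : S1[k - 1]'hklen = t := by
    rw [List.getElem?_eq_getElem hklen] at ht
    exact Option.some_injective _ ht
  -- Elements of the top-k prefix are at least `t`.
  have htake : ∀ a ∈ S1.take k, t ≤ a := by
    intro a ha
    obtain ⟨i, hi, rfl⟩ := List.getElem_of_mem ha
    rw [List.length_take] at hi
    rw [List.getElem_take]
    have hik : i ≤ k - 1 := by omega
    have := hS1sorted.rel_get_of_le (a := ⟨i, by omega⟩) (b := ⟨k - 1, hklen⟩)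
      (by exact hik)
    simpa [List.get_eq_getElem, htval] using this
  -- Elements of the rest of `S1` are at most `t`.
  have hdrop : ∀ b ∈ S1.drop k, b ≤ t := by
    intro b hb
    obtain ⟨i, hi, rfl⟩ := List.getElem_of_mem hb
    rw [List.length_drop] at hi
    rw [List.getElem_drop]
    have := hS1sorted.rel_get_of_le (a := ⟨k - 1, hklen⟩) (b := ⟨k + i, by omega⟩)
      (by simp; omega)
    simpa [List.get_eq_getElem, htval] using this
  -- The unprocessed tail.
  set L2 : List ℝ := (List.ofFn φ).drop m with hL2
  have hL2le : ∀ b ∈ L2, b ≤ t := by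
    intro b hb
    obtain ⟨i, hi, rfl⟩ := List.getElem_of_mem hb
    have : L2[i] = φ ⟨m + i, by rw [hL2, List.length_drop, List.length_ofFn] at hi; omega⟩ := by
      simp [hL2]
    rw [this]
    exact part1 _ (by simp)
  -- The processed prefix of `ofFn φ` is `L1`.
  have hsplit : (List.ofFn φ).take m = L1 := by
    rw [hL1]
    apply List.ext_getElem
    · simp; omega
    · intro i h1 h2
      simp [List.getElem_take]
  have hperm : List.Perm (List.ofFn φ) (L1 ++ L2) := by
    conv_lhs => rw [← List.take_append_drop m (List.ofFn φ)]
    rw [hsplit]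
  -- The candidate sorted form of the full list.
  set R : List ℝ := (S1.drop k ++ L2).insertionSort (· ≥ ·) with hR
  have hRsorted : R.Pairwise (· ≥ ·) := List.pairwise_insertionSort _ _
  have hRle : ∀ b ∈ R, b ≤ t := by
    intro b hb
    rw [hR, List.mem_insertionSort, List.mem_append] at hb
    rcases hb with hb | hb
    · exact hdrop b hb
    · exact hL2le b hb
  have hmain : (List.ofFn φ).insertionSort (· ≥ ·) = S1.take k ++ R := by
    have p1 : List.Perm ((List.ofFn φ).insertionSort (· ≥ ·)) (List.ofFn φ) :=
      List.perm_insertionSort _ _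
    have p3 : List.Perm (L1 ++ L2) (S1 ++ L2) :=
      (List.perm_insertionSort _ _).symm.append_right _
    have p5 : List.Perm (S1 ++ L2) (S1.take k ++ R) := by
      conv_lhs => rw [← List.take_append_drop k S1]
      rw [List.append_assoc]
      exact List.Perm.append_left _ ((List.perm_insertionSort _ _).symm)
    refine (fun hp h1 h2 => List.Perm.eq_of_pairwise' (r := (· ≥ ·)) h1 h2 hp) ?_ ?_ ?_
    · exact ((p1.trans hperm).trans p3).trans p5
    · exact List.pairwise_insertionSort _ _
    · rw [List.pairwise_append]
      refine ⟨hS1sorted.sublist (List.take_sublist _ _), hRsorted, ?_⟩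
      intro a ha b hb
      exact le_trans (hRle b hb) (htake a ha)
  have hlen : (S1.take k).length = k := by
    rw [List.length_take]; omega
  rw [hmain]
  have : (S1.take k ++ R).take k = S1.take k := by
    conv_lhs => rw [← hlen]
    simp
  rw [this]
end

section
/- Let f : Fin n → ℝ and k ≤ m ≤ n. Suppose t is the k-th largest value among f restricted to indices < m, and suppose f j ≤ t for all indices j with m ≤ j < n. Then the multiset of the k largest values of f over all of Fin n equals the multiset of the k largest values of f over indices < m. -/
lemma sorted_getElem?_le {l : List ℝ} (hl : l.Pairwise (· ≥ ·)) {i j : ℕ} (hij : i ≤ j)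
    {v : ℝ} (h : l[j]? = some v) : ∃ u, l[i]? = some u ∧ v ≤ u := by
  obtain ⟨hj, rfl⟩ := List.getElem?_eq_some_iff.1 h
  have hi : i < l.length := lt_of_le_of_lt hij hj
  refine ⟨l[i], List.getElem?_eq_some_iff.2 ⟨hi, rfl⟩, ?_⟩
  rcases eq_or_lt_of_le hij with rfl | hlt
  · exact le_rfl
  · have := hl.rel_get_of_lt (a := ⟨i, hi⟩) (b := ⟨j, hj⟩) hlt
    simpa using this

lemma ins_topk (x t : ℝ) (hx : x ≤ t) :
    ∀ (s : List ℝ) (k : ℕ), 1 ≤ k → s.Pairwise (· ≥ ·) →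
    ∀ t', s[k-1]? = some t' → t ≤ t' →
    (↑((List.orderedInsert (· ≥ ·) x s).take k) : Multiset ℝ) = ↑(s.take k) ∧
      ∃ t'', (List.orderedInsert (· ≥ ·) x s)[k-1]? = some t'' ∧ t ≤ t'' := by
  intro s
  induction s with
  | nil => intro k _ _ t' h; simp at h
  | cons a s' ih =>
    intro k hk hs t' hst htt
    obtain ⟨K, rfl⟩ : ∃ K, k = K + 1 := ⟨k - 1, (Nat.succ_pred_eq_of_pos hk).symm⟩
    simp only [Nat.add_sub_cancel] at hst ⊢
    rw [List.orderedInsert]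
    by_cases hxa : x ≥ a
    · rw [if_pos hxa]
      have hmem : t' ∈ a :: s' := by
        obtain ⟨hi, rfl⟩ := List.getElem?_eq_some_iff.1 hst
        exact List.getElem_mem hi
      have hat' : t' ≤ a := by
        rcases List.mem_cons.1 hmem with h | h
        · exact le_of_eq h
        · exact List.rel_of_pairwise_cons hs (a' := t') h
      have hax : a = x := le_antisymm hxa (hx.trans (htt.trans hat'))
      have hxt' : x = t' := le_antisymm (hx.trans htt) (hax ▸ hat')
      constructor
      · rcases Nat.eq_zero_or_pos K with rfl | hK1
        · simp only [List.getElem?_cons_zero, Option.some.injEq] at hst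
          simp [hax, hst]
        · obtain ⟨j, rfl⟩ : ∃ j, K = j + 1 := ⟨K - 1, (Nat.succ_pred_eq_of_pos hK1).symm⟩
          have hsj : s'[j]? = some t' := by simpa using hst
          have hs'take : s'.take (j+1) = s'.take j ++ [t'] := by
            rw [List.take_succ, hsj]; rfl
          rw [List.take_succ_cons, List.take_succ_cons, List.take_succ_cons, hs'take]
          rw [Multiset.coe_eq_coe]
          subst hxt'
          subst hax
          exact List.Perm.cons a (List.perm_append_singleton a (s'.take j)).symm
      · rcases Nat.eq_zero_or_pos K with rfl | hK1
        · exact ⟨x, by simp, htt.trans hxt'.symm.le⟩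
        · obtain ⟨j, rfl⟩ : ∃ j, K = j + 1 := ⟨K - 1, (Nat.succ_pred_eq_of_pos hK1).symm⟩
          obtain ⟨u, hu, hvu⟩ := sorted_getElem?_le hs (Nat.le_succ j) hst
          exact ⟨u, by simpa using hu, htt.trans hvu⟩
    · rw [if_neg hxa]
      rcases Nat.eq_zero_or_pos K with rfl | hK1
      · simp only [List.getElem?_cons_zero, Option.some.injEq] at hst
        exact ⟨by simp, a, by simp, hst ▸ htt⟩
      · obtain ⟨j, rfl⟩ : ∃ j, K = j + 1 := ⟨K - 1, (Nat.succ_pred_eq_of_pos hK1).symm⟩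
        have hsj : s'[j]? = some t' := by simpa using hst
        obtain ⟨hmul, t'', hins, ht''⟩ :=
          ih (j+1) (Nat.le_add_left 1 j) hs.of_cons t' (by simpa using hsj) htt
        refine ⟨?_, t'', by simpa using hins, ht''⟩
        rw [List.take_succ_cons, List.take_succ_cons, ← Multiset.cons_coe, ← Multiset.cons_coe,
          hmul]

lemma topk_aux {m k : ℕ} (hk : 1 ≤ k) (t : ℝ) :
    ∀ (n : ℕ) (hmn : m ≤ n) (f : Fin n → ℝ),
    (((List.ofFn fun i : Fin m => f (Fin.castLE hmn i)).insertionSort (· ≥ ·))[k - 1]?) = some t →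
    (∀ j : Fin n, m ≤ j.val → f j ≤ t) →
    (↑(((List.ofFn f).insertionSort (· ≥ ·)).take k) : Multiset ℝ) =
      ↑(((List.ofFn fun i : Fin m => f (Fin.castLE hmn i)).insertionSort (· ≥ ·)).take k) ∧
    ∃ t', (((List.ofFn f).insertionSort (· ≥ ·))[k - 1]?) = some t' ∧ t ≤ t' := by
  intro n
  induction n with
  | zero =>
    intro hmn f ht _
    interval_cases m
    have : (fun i : Fin 0 => f (Fin.castLE hmn i)) = f := by
      funext i; exact absurd i.2 (Nat.not_lt_zero _)
    rw [this] at ht ⊢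
    exact ⟨rfl, t, ht, le_rfl⟩
  | succ n ihn =>
    intro hmn f ht htail
    rcases Nat.lt_or_ge m (n+1) with hlt | hge
    · -- m ≤ n, peel off the last element
      have hmn' : m ≤ n := Nat.lt_succ_iff.1 hlt
      set g : Fin n → ℝ := fun j => f j.castSucc with hg
      have hcast : (fun i : Fin m => f (Fin.castLE hmn i)) =
          (fun i : Fin m => g (Fin.castLE hmn' i)) := by
        funext i; rfl
      rw [hcast] at ht ⊢
      obtain ⟨heq, t', ht', htt'⟩ := ihn hmn' g ht
        (fun j hj => htail j.castSucc (by simpa using hj))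
      have hsorteq : (List.ofFn f).insertionSort (· ≥ ·) =
          List.orderedInsert (· ≥ ·) (f (Fin.last n)) ((List.ofFn g).insertionSort (· ≥ ·)) := by
        have h1 : List.insertionSort (· ≥ ·) (f (Fin.last n) :: List.ofFn g) =
            List.orderedInsert (· ≥ ·) (f (Fin.last n)) ((List.ofFn g).insertionSort (· ≥ ·)) := rfl
        rw [← h1]
        refine List.Perm.eq_of_pairwise (fun a b _ _ h1 h2 => le_antisymm h2 h1)
          (List.pairwise_insertionSort _ _) (List.pairwise_insertionSort _ _) ?_
        refine ((List.perm_insertionSort _ _).trans ?_).trans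
          (List.perm_insertionSort _ _).symm
        rw [List.ofFn_succ', List.concat_eq_append]
        exact List.perm_append_singleton _ _
      have hlast : f (Fin.last n) ≤ t := htail (Fin.last n) (by simpa using hmn')
      obtain ⟨hmul, t'', ht'', htt''⟩ :=
        ins_topk (f (Fin.last n)) t hlast ((List.ofFn g).insertionSort (· ≥ ·)) k hk
          (List.pairwise_insertionSort _ _) t' ht' htt'
      rw [hsorteq]
      exact ⟨hmul.trans heq, t'', ht'', htt''⟩
    · -- m = n + 1
      have hm : m = n + 1 := le_antisymm hmn hge
      subst hm
      have : (fun i : Fin (n+1) => f (Fin.castLE hmn i)) = f := by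
        funext i; rfl
      rw [this] at ht ⊢
      exact ⟨rfl, t, ht, le_rfl⟩

/-- Abstract correctness of early stopping: if `t` is the `k`-th largest value
among the first `m` scores and every remaining score is at most `t`, then the
multiset of the `k` largest scores overall equals the multiset of the `k`
largest scores among the first `m`. -/
theorem topk_eq_of_tail_le {n k m : ℕ} (hk : 1 ≤ k) (hkm : k ≤ m) (hmn : m ≤ n)
    (f : Fin n → ℝ) (t : ℝ)
    (ht : (((List.ofFn fun i : Fin m => f (Fin.castLE hmn i)).insertionSort
      (· ≥ ·))[k - 1]?) = some t)
    (htail : ∀ j : Fin n, m ≤ j.val → f j ≤ t) :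
    (↑(((List.ofFn f).insertionSort (· ≥ ·)).take k) : Multiset ℝ) =
      ↑(((List.ofFn fun i : Fin m => f (Fin.castLE hmn i)).insertionSort
        (· ≥ ·)).take k) := by
  exact (topk_aux hk t n hmn f ht htail).1
end
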